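/- Let E be a real topological vector space with dual E*, T : E ⇉ E*, x* ∈ E*, and K ⊆ E a nonempty compact convex set. Suppose that for every finite subset {(x_1,x_1*),…,(x_m,x_m*)} of T ∩ (K × E*) there exists x̄ in the convex hull of {x_1,…,x_m} with ⟨x_i* − x*, x_i − x̄⟩ ≥ 0 for all i. Then there exists x̄ ∈ K such that ⟨y* − x*, y − x̄⟩ ≥ 0 for all (y,y*) ∈ T ∩ (K × E*). -/

import Mathlib

/-- If every finite subsystem of the Minty variational inequality on a nonempty compact
convex set `K` has a solution in the corresponding convex hull, then the full system
has a solution in `K`. -/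
theorem minty_finite_to_compact {E : Type*} [AddCommGroup E] [Module ℝ E]
    [TopologicalSpace E] [IsTopologicalAddGroup E] [ContinuousSMul ℝ E]
    (T : E → Set (E →L[ℝ] ℝ)) (z : E →L[ℝ] ℝ)
    (K : Set E) (hK : K.Nonempty) (hKc : IsCompact K) (hKconv : Convex ℝ K)
    (hfin : ∀ (m : ℕ), 0 < m → ∀ (x : Fin m → E) (x' : Fin m → E →L[ℝ] ℝ),
      (∀ i, x i ∈ K) → (∀ i, x' i ∈ T (x i)) →
      ∃ xb ∈ convexHull ℝ (Set.range x), ∀ i, 0 ≤ (x' i - z) (x i - xb)) :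
    ∃ xb ∈ K, ∀ y ∈ K, ∀ y' ∈ T y, 0 ≤ (y' - z) (y - xb) := by
  classical
  set ι := {p : E × (E →L[ℝ] ℝ) // p.1 ∈ K ∧ p.2 ∈ T p.1} with hι
  set Z : ι → Set E := fun p => {x | 0 ≤ (p.1.2 - z) (p.1.1 - x)} with hZ
  have hZc : ∀ p : ι, IsClosed (Z p) := by
    intro p
    have hc : Continuous fun x : E => (p.1.2 - z) (p.1.1 - x) :=
      (p.1.2 - z).continuous.comp (continuous_const.sub continuous_id)
    exact isClosed_le continuous_const hc
  have hfip : ∀ t : Finset ι, (K ∩ ⋂ p ∈ t, Z p).Nonempty := by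
    intro t
    rcases t.eq_empty_or_nonempty with rfl | ht
    · simpa using hK
    · set m := t.card with hm
      have hmpos : 0 < m := Finset.card_pos.mpr ht
      set e : t ≃ Fin m := t.equivFin with he
      set x : Fin m → E := fun i => ((e.symm i : ι) : E × (E →L[ℝ] ℝ)).1 with hx
      set x' : Fin m → (E →L[ℝ] ℝ) := fun i => ((e.symm i : ι) : E × (E →L[ℝ] ℝ)).2 with hx'
      have hxK : ∀ i, x i ∈ K := fun i => ((e.symm i : ι)).2.1
      have hxT : ∀ i, x' i ∈ T (x i) := fun i => ((e.symm i : ι)).2.2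
      obtain ⟨xb, hxb, hxbi⟩ := hfin m hmpos x x' hxK hxT
      refine ⟨xb, ?_, ?_⟩
      · exact convexHull_min (Set.range_subset_iff.2 hxK) hKconv hxb
      · refine Set.mem_iInter₂.2 fun p hp => ?_
        have := hxbi (e ⟨p, hp⟩)
        simp only [x, x', Equiv.symm_apply_apply] at this
        exact this
  obtain ⟨xb, hxbK, hxbZ⟩ := hKc.inter_iInter_nonempty Z hZc hfip
  refine ⟨xb, hxbK, fun y hy y' hy' => ?_⟩
  exact Set.mem_iInter.1 hxbZ ⟨(y, y'), hy, hy'⟩
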